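/- Let (α₁, α₂, α₃) ∈ [0,π]³. There exist A, B ∈ SU(2) such that α(A) = α₁, α(B) = α₂ and α(A·B) = α₃ if and only if |α₁ − α₂| ≤ α₃ ≤ min(α₁ + α₂, 2π − (α₁ + α₂)). -/

import Mathlib

open Complex Matrix

/-- The angle `α(U) = arccos(Re(tr U)/2) ∈ [0,π]` of a matrix `U`. -/
noncomputable def suAngle (U : Matrix (Fin 2) (Fin 2) ℂ) : ℝ :=
  Real.arccos ((Matrix.trace U).re / 2)

lemma my_arccos_le_arccos {x y : ℝ} (h : x ≤ y) : Real.arccos y ≤ Real.arccos x := by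
  unfold Real.arccos
  have := Real.monotone_arcsin h
  linarith

lemma su2_exists_s (α₁ α₂ α₃ : ℝ)
    (h₁ : α₁ ∈ Set.Icc (0 : ℝ) Real.pi) (h₂ : α₂ ∈ Set.Icc (0 : ℝ) Real.pi)
    (h₃ : α₃ ∈ Set.Icc (0 : ℝ) Real.pi)
    (hl : |α₁ - α₂| ≤ α₃) (hr : α₃ ≤ min (α₁ + α₂) (2 * Real.pi - (α₁ + α₂))) :
    ∃ s : ℝ, |s| ≤ 1 ∧
      Real.cos α₃ = Real.cos α₁ * Real.cos α₂ - s * (Real.sin α₁ * Real.sin α₂) := by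
  obtain ⟨h10, h11⟩ := h₁
  obtain ⟨h20, h21⟩ := h₂
  obtain ⟨h30, h31⟩ := h₃
  have pi_pos := Real.pi_pos
  have habs : |α₁ - α₂| ≤ Real.pi := by
    rcases abs_cases (α₁ - α₂) with ⟨h, _⟩ | ⟨h, _⟩ <;> linarith
  have hub : Real.cos α₃ ≤ Real.cos (α₁ - α₂) := by
    have : Real.cos α₃ ≤ Real.cos |α₁ - α₂| :=
      Real.cos_le_cos_of_nonneg_of_le_pi (abs_nonneg _) h31 hl
    rcases abs_cases (α₁ - α₂) with ⟨h, _⟩ | ⟨h, _⟩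
    · rwa [h] at this
    · rw [h, Real.cos_neg] at this; exact this
  have hβcos : Real.cos (min (α₁ + α₂) (2 * Real.pi - (α₁ + α₂))) = Real.cos (α₁ + α₂) := by
    rcases min_cases (α₁ + α₂) (2 * Real.pi - (α₁ + α₂)) with ⟨h, _⟩ | ⟨h, _⟩
    · rw [h]
    · rw [h, Real.cos_sub, Real.cos_two_pi, Real.sin_two_pi]; ring
  have hβpi : min (α₁ + α₂) (2 * Real.pi - (α₁ + α₂)) ≤ Real.pi := by
    rcases le_total (α₁ + α₂) Real.pi with h | h
    · exact le_trans (min_le_left _ _) h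
    · exact le_trans (min_le_right _ _) (by linarith)
  have hlb : Real.cos (α₁ + α₂) ≤ Real.cos α₃ := by
    rw [← hβcos]
    exact Real.cos_le_cos_of_nonneg_of_le_pi h30 hβpi hr
  rw [Real.cos_add] at hlb
  rw [Real.cos_sub] at hub
  have hs1 : Real.sin α₁ ≥ 0 := Real.sin_nonneg_of_nonneg_of_le_pi h10 h11
  have hs2 : Real.sin α₂ ≥ 0 := Real.sin_nonneg_of_nonneg_of_le_pi h20 h21
  rcases eq_or_lt_of_le (mul_nonneg hs1 hs2) with hz | hz
  · exact ⟨0, by norm_num, by nlinarith⟩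
  · refine ⟨(Real.cos α₁ * Real.cos α₂ - Real.cos α₃) / (Real.sin α₁ * Real.sin α₂), ?_, ?_⟩
    · rw [abs_div, div_le_one (by rw [abs_of_pos hz]; exact hz)]
      rw [abs_of_pos hz]
      rcases abs_cases (Real.cos α₁ * Real.cos α₂ - Real.cos α₃) with ⟨h, _⟩ | ⟨h, _⟩ <;>
        rw [h] <;> linarith
    · rw [div_mul_cancel₀ _ hz.ne']; ring

lemma su2_form_mem (x y t : ℝ) (h : x ^ 2 + y ^ 2 + t ^ 2 = 1) :
    !![(x : ℂ) + (y : ℝ) * I, (t : ℂ); (-t : ℂ), (x : ℂ) - (y : ℝ) * I] ∈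
      Matrix.specialUnitaryGroup (Fin 2) ℂ := by
  rw [Matrix.mem_specialUnitaryGroup_iff, Matrix.mem_unitaryGroup_iff]
  constructor
  · ext i j
    fin_cases i <;> fin_cases j <;>
      simp [Matrix.mul_apply, Fin.sum_univ_two, Matrix.star_apply, Matrix.one_apply,
        Complex.ext_iff] <;>
      (try constructor) <;> nlinarith [h]
  · rw [Matrix.det_fin_two]
    simp [Complex.ext_iff]
    (try constructor) <;> nlinarith [h]

lemma su2_form_angle (x y t : ℝ) :
    suAngle !![(x : ℂ) + (y : ℝ) * I, (t : ℂ); (-t : ℂ), (x : ℂ) - (y : ℝ) * I] =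
      Real.arccos x := by
  unfold suAngle
  congr 1
  simp [Matrix.trace_fin_two]

lemma su2_form_mul_angle (x₁ y₁ x₂ y₂ t : ℝ) :
    suAngle (!![(x₁ : ℂ) + (y₁ : ℝ) * I, ((0:ℝ) : ℂ); (-(0:ℝ) : ℂ), (x₁ : ℂ) - (y₁ : ℝ) * I] *
      !![(x₂ : ℂ) + (y₂ : ℝ) * I, (t : ℂ); (-t : ℂ), (x₂ : ℂ) - (y₂ : ℝ) * I]) =
      Real.arccos (x₁ * x₂ - y₁ * y₂) := by
  unfold suAngle
  congr 1
  simp [Matrix.trace_fin_two, Matrix.mul_apply, Fin.sum_univ_two]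

lemma su2_struct {A : Matrix (Fin 2) (Fin 2) ℂ}
    (hA : A ∈ Matrix.specialUnitaryGroup (Fin 2) ℂ) :
    A 1 1 = starRingEnd ℂ (A 0 0) ∧ A 1 0 = - starRingEnd ℂ (A 0 1) ∧
      (A 0 0).re ^ 2 + (A 0 0).im ^ 2 + (A 0 1).re ^ 2 + (A 0 1).im ^ 2 = 1 := by
  obtain ⟨hu, hdet⟩ := Matrix.mem_specialUnitaryGroup_iff.mp hA
  rw [Matrix.mem_unitaryGroup_iff] at hu
  rw [Matrix.det_fin_two] at hdet
  have h1 : (A * star A) 0 0 = 1 := by rw [hu]; simp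
  have h2 : (A * star A) 0 1 = 0 := by rw [hu]; simp
  have h3 : (A * star A) 1 1 = 1 := by rw [hu]; simp
  simp only [Matrix.mul_apply, Fin.sum_univ_two, Matrix.star_apply,
    Matrix.conjTranspose_apply, RingHom.id_apply, star_def] at h1 h2 h3
  have h2' := congrArg (starRingEnd ℂ) h2
  have hdet' := congrArg (starRingEnd ℂ) hdet
  simp only [map_add, _root_.map_mul, map_sub, Complex.conj_conj, _root_.map_one,
    map_zero] at h2' hdet'
  refine ⟨?_, ?_, ?_⟩
  · linear_combination (starRingEnd ℂ (A 0 0)) * h3 - A 1 1 * hdet' -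
      (starRingEnd ℂ (A 1 0)) * h2'
  · linear_combination -(starRingEnd ℂ (A 0 1)) * h3 + (starRingEnd ℂ (A 1 1)) * h2' -
      A 1 0 * hdet'
  · have := congrArg Complex.re h1
    simp only [Complex.add_re, Complex.mul_re, Complex.conj_re, Complex.conj_im,
      Complex.one_re] at this
    nlinarith [this]

lemma su2_forward {A B : Matrix (Fin 2) (Fin 2) ℂ} {α₁ α₂ α₃ : ℝ}
    (h₁ : α₁ ∈ Set.Icc (0 : ℝ) Real.pi) (h₂ : α₂ ∈ Set.Icc (0 : ℝ) Real.pi)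
    (h₃ : α₃ ∈ Set.Icc (0 : ℝ) Real.pi)
    (hA : A ∈ Matrix.specialUnitaryGroup (Fin 2) ℂ)
    (hB : B ∈ Matrix.specialUnitaryGroup (Fin 2) ℂ)
    (ha1 : suAngle A = α₁) (ha2 : suAngle B = α₂) (ha3 : suAngle (A * B) = α₃) :
    |α₁ - α₂| ≤ α₃ ∧ α₃ ≤ min (α₁ + α₂) (2 * Real.pi - (α₁ + α₂)) := by
  obtain ⟨hd, hc, hn⟩ := su2_struct hA
  obtain ⟨hh, hg, hm⟩ := su2_struct hB
  -- cos α₁ = (A 0 0).re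
  have hang : ∀ C : Matrix (Fin 2) (Fin 2) ℂ, C 1 1 = starRingEnd ℂ (C 0 0) →
      suAngle C = Real.arccos ((C 0 0).re) := by
    intro C hC
    unfold suAngle
    congr 1
    rw [Matrix.trace_fin_two, hC]
    simp
  have hcos1 : Real.cos α₁ = (A 0 0).re := by
    rw [← ha1, hang A hd, Real.cos_arccos (by nlinarith) (by nlinarith)]
  have hcos2 : Real.cos α₂ = (B 0 0).re := by
    rw [← ha2, hang B hh, Real.cos_arccos (by nlinarith) (by nlinarith)]
  have hsin1 : Real.sin α₁ ^ 2 = (A 0 0).im ^ 2 + (A 0 1).re ^ 2 + (A 0 1).im ^ 2 := by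
    have h := Real.sin_sq_add_cos_sq α₁
    rw [hcos1] at h
    linarith
  have hsin2 : Real.sin α₂ ^ 2 = (B 0 0).im ^ 2 + (B 0 1).re ^ 2 + (B 0 1).im ^ 2 := by
    have h := Real.sin_sq_add_cos_sq α₂
    rw [hcos2] at h
    linarith
  have hsn1 : 0 ≤ Real.sin α₁ := Real.sin_nonneg_of_nonneg_of_le_pi h₁.1 h₁.2
  have hsn2 : 0 ≤ Real.sin α₂ := Real.sin_nonneg_of_nonneg_of_le_pi h₂.1 h₂.2
  -- trace of product
  have hT : (Matrix.trace (A * B)).re / 2 =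
      (A 0 0).re * (B 0 0).re - (A 0 0).im * (B 0 0).im
        - (A 0 1).re * (B 0 1).re - (A 0 1).im * (B 0 1).im := by
    rw [Matrix.trace_fin_two, Matrix.mul_apply, Matrix.mul_apply, Fin.sum_univ_two,
      Fin.sum_univ_two, hd, hc, hh, hg]
    simp [Complex.add_re, Complex.mul_re, Complex.conj_re, Complex.conj_im]
    ring
  set T : ℝ := (Matrix.trace (A * B)).re / 2 with hTdef
  -- Cauchy-Schwarz bound
  have hCS : ((A 0 0).im * (B 0 0).im + (A 0 1).re * (B 0 1).re
      + (A 0 1).im * (B 0 1).im) ^ 2 ≤ (Real.sin α₁ * Real.sin α₂) ^ 2 := by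
    rw [mul_pow, hsin1, hsin2]
    nlinarith [sq_nonneg ((A 0 0).im * (B 0 1).re - (A 0 1).re * (B 0 0).im),
      sq_nonneg ((A 0 0).im * (B 0 1).im - (A 0 1).im * (B 0 0).im),
      sq_nonneg ((A 0 1).re * (B 0 1).im - (A 0 1).im * (B 0 1).re)]
  have habs : |(A 0 0).im * (B 0 0).im + (A 0 1).re * (B 0 1).re
      + (A 0 1).im * (B 0 1).im| ≤ Real.sin α₁ * Real.sin α₂ := by
    have := Real.sqrt_le_sqrt hCS
    rwa [Real.sqrt_sq_eq_abs, Real.sqrt_sq_eq_abs,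
      _root_.abs_of_nonneg (mul_nonneg hsn1 hsn2)] at this
  rw [abs_le] at habs
  have hlow : Real.cos (α₁ + α₂) ≤ T := by
    rw [Real.cos_add, hcos1, hcos2, hT]; linarith [habs.2]
  have hup : T ≤ Real.cos (α₁ - α₂) := by
    rw [Real.cos_sub, hcos1, hcos2, hT]; linarith [habs.1]
  have hTlb : -1 ≤ T := le_trans (Real.neg_one_le_cos _) hlow
  have ha3' : α₃ = Real.arccos T := by rw [← ha3]; rfl
  have habs2 : |α₁ - α₂| ≤ Real.pi := by
    rcases abs_cases (α₁ - α₂) with ⟨h, _⟩ | ⟨h, _⟩ <;>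
      [skip; skip] <;> obtain ⟨l1, r1⟩ := h₁ <;> obtain ⟨l2, r2⟩ := h₂ <;> linarith [h]
  constructor
  · have hcabs : Real.cos |α₁ - α₂| = Real.cos (α₁ - α₂) := by
      rcases abs_cases (α₁ - α₂) with ⟨h, _⟩ | ⟨h, _⟩
      · rw [h]
      · rw [h, Real.cos_neg]
    calc |α₁ - α₂| = Real.arccos (Real.cos |α₁ - α₂|) :=
          (Real.arccos_cos (abs_nonneg _) habs2).symm
      _ ≤ Real.arccos T := by
          rw [hcabs]
          exact (by
            unfold Real.arccos
            have := Real.monotone_arcsin hup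
            linarith : Real.arccos (Real.cos (α₁ - α₂)) ≤ Real.arccos T)
      _ = α₃ := ha3'.symm
  · have hβ0 : 0 ≤ min (α₁ + α₂) (2 * Real.pi - (α₁ + α₂)) := by
      obtain ⟨l1, r1⟩ := h₁; obtain ⟨l2, r2⟩ := h₂
      rcases min_cases (α₁ + α₂) (2 * Real.pi - (α₁ + α₂)) with ⟨h, _⟩ | ⟨h, _⟩ <;>
        rw [h] <;> linarith
    have hβpi : min (α₁ + α₂) (2 * Real.pi - (α₁ + α₂)) ≤ Real.pi := by
      rcases le_total (α₁ + α₂) Real.pi with h | h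
      · exact le_trans (min_le_left _ _) h
      · exact le_trans (min_le_right _ _) (by linarith)
    have hβcos : Real.cos (min (α₁ + α₂) (2 * Real.pi - (α₁ + α₂))) =
        Real.cos (α₁ + α₂) := by
      rcases min_cases (α₁ + α₂) (2 * Real.pi - (α₁ + α₂)) with ⟨h, _⟩ | ⟨h, _⟩
      · rw [h]
      · rw [h, Real.cos_sub, Real.cos_two_pi, Real.sin_two_pi]; ring
    calc α₃ = Real.arccos T := ha3'
      _ ≤ Real.arccos (Real.cos (min (α₁ + α₂) (2 * Real.pi - (α₁ + α₂)))) := by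
          rw [hβcos]
          unfold Real.arccos
          have := Real.monotone_arcsin hlow
          linarith
      _ = min (α₁ + α₂) (2 * Real.pi - (α₁ + α₂)) := Real.arccos_cos hβ0 hβpi

/-- Pair-of-pants case of the moment map image theorem: `(α₁,α₂,α₃) ∈ [0,π]³` arises as the
angles `(α(A), α(B), α(AB))` of matrices `A, B ∈ SU(2)` if and only if
`|α₁ - α₂| ≤ α₃ ≤ min(α₁ + α₂, 2π - (α₁ + α₂))`. -/
theorem su2_triangle_inequalities (α₁ α₂ α₃ : ℝ)
    (h₁ : α₁ ∈ Set.Icc (0 : ℝ) Real.pi) (h₂ : α₂ ∈ Set.Icc (0 : ℝ) Real.pi)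
    (h₃ : α₃ ∈ Set.Icc (0 : ℝ) Real.pi) :
    (∃ A B : Matrix (Fin 2) (Fin 2) ℂ,
        A ∈ Matrix.specialUnitaryGroup (Fin 2) ℂ ∧
        B ∈ Matrix.specialUnitaryGroup (Fin 2) ℂ ∧
        suAngle A = α₁ ∧ suAngle B = α₂ ∧ suAngle (A * B) = α₃) ↔
      |α₁ - α₂| ≤ α₃ ∧ α₃ ≤ min (α₁ + α₂) (2 * Real.pi - (α₁ + α₂)) := by
  constructor
  · rintro ⟨A, B, hA, hB, ha1, ha2, ha3⟩
    exact su2_forward h₁ h₂ h₃ hA hB ha1 ha2 ha3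
  · rintro ⟨hl, hr⟩
    obtain ⟨s, hs, hcos⟩ := su2_exists_s α₁ α₂ α₃ h₁ h₂ h₃ hl hr
    have hs2 : s ^ 2 ≤ 1 := by nlinarith [abs_nonneg s, _root_.sq_abs s]
    have hsqrt : Real.sqrt (1 - s ^ 2) ^ 2 = 1 - s ^ 2 := Real.sq_sqrt (by linarith)
    have hc1 := Real.sin_sq_add_cos_sq α₁
    have hc2 := Real.sin_sq_add_cos_sq α₂
    refine ⟨!![(Real.cos α₁ : ℂ) + (Real.sin α₁ : ℝ) * I, ((0:ℝ) : ℂ);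
          (-(0:ℝ) : ℂ), (Real.cos α₁ : ℂ) - (Real.sin α₁ : ℝ) * I],
        !![(Real.cos α₂ : ℂ) + (s * Real.sin α₂ : ℝ) * I,
            ((Real.sqrt (1 - s ^ 2) * Real.sin α₂ : ℝ) : ℂ);
          (-(Real.sqrt (1 - s ^ 2) * Real.sin α₂ : ℝ) : ℂ),
            (Real.cos α₂ : ℂ) - (s * Real.sin α₂ : ℝ) * I], ?_, ?_, ?_, ?_, ?_⟩
    · exact su2_form_mem _ _ _ (by nlinarith)
    · exact su2_form_mem _ _ _ (by nlinarith)
    · rw [su2_form_angle, Real.arccos_cos h₁.1 h₁.2]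
    · rw [su2_form_angle, Real.arccos_cos h₂.1 h₂.2]
    · rw [su2_form_mul_angle, show Real.cos α₁ * Real.cos α₂ - Real.sin α₁ * (s * Real.sin α₂)
          = Real.cos α₃ by rw [hcos]; ring, Real.arccos_cos h₃.1 h₃.2]
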